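/- Let ∇ be the torsion-free affine connection on ℝ³ whose only nonzero Christoffel symbols are Γ²₁₁ = f₁, Γ²₂₂ = f₂, Γ²₃₃ = f₃ for smooth functions f₁, f₂, f₃ : ℝ³ → ℝ. If the Ricci tensor of ∇ is cyclic parallel at every point of ℝ³, then the following nine identities hold on ℝ³: ∂₁∂₃f₂ = 0; ∂₁∂₂f₂ − f₂∂₁f₂ = 0; ∂₃∂₂f₂ − f₂∂₃f₂ = 0; ∂₁∂₂f₁ + 2f₁∂₁f₂ + f₂∂₁f₁ = 0; ∂₂∂₃f₃ + 2f₃∂₃f₂ + f₂∂₃f₃ = 0; ∂₂∂₃f₁ + 2f₁∂₃f₂ + f₂∂₃f₁ = 0; ∂₂∂₁f₃ + 2f₃∂₁f₂ + f₂∂₁f₃ = 0; ∂₂²f₁ + f₁∂₂f₂ + f₂∂₂f₁ − ∂₁²f₂ = 0; ∂₂²f₃ + f₃∂₂f₂ + f₂∂₂f₃ − ∂₃²f₂ = 0. -/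

import Mathlib

open scoped BigOperators

noncomputable section

variable {ι : Type} [Fintype ι] [DecidableEq ι]

/-- Partial derivative in the `i`-th coordinate direction. -/
def pd (i : ι) (f : (ι → ℝ) → ℝ) : (ι → ℝ) → ℝ :=
  fun p => fderiv ℝ f p (Pi.single i 1)

/-- Curvature components `R^l_{ijk}` of the torsion-free connection with Christoffel
symbols `Γ k i j = Γᵏᵢⱼ`:
`Rˡᵢⱼₖ = ∂ᵢΓˡⱼₖ − ∂ⱼΓˡᵢₖ + Σₘ (Γˡᵢₘ Γᵐⱼₖ − Γˡⱼₘ Γᵐᵢₖ)`. -/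
def curv (Γ : ι → ι → ι → (ι → ℝ) → ℝ) (l i j k : ι) : (ι → ℝ) → ℝ :=
  fun p => pd i (Γ l j k) p - pd j (Γ l i k) p +
    ∑ m, (Γ l i m p * Γ m j k p - Γ l j m p * Γ m i k p)

/-- Components `(∇ₕR)ˡᵢⱼₖ` of the covariant derivative of the curvature. -/
def covR (Γ : ι → ι → ι → (ι → ℝ) → ℝ) (h l i j k : ι) : (ι → ℝ) → ℝ :=
  fun p => pd h (curv Γ l i j k) p +
    ∑ m, (Γ l h m p * curv Γ m i j k p - Γ m h i p * curv Γ l m j k p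
      - Γ m h j p * curv Γ l i m k p - Γ m h k p * curv Γ l i j m p)

/-- The Szabó operator `S(X) : Y ↦ (∇_X R)(Y,X)X` at the point `p`, as a matrix:
`(S(X)Y)ˡ = Σ_{h,i,j,k} Xʰ Yⁱ Xʲ Xᵏ (∇ₕR)ˡᵢⱼₖ`. -/
def szabo (Γ : ι → ι → ι → (ι → ℝ) → ℝ) (p X : ι → ℝ) : Matrix ι ι ℝ :=
  Matrix.of fun l i => ∑ h, ∑ j, ∑ k, X h * X j * X k * covR Γ h l i j k p

/-- Ricci tensor `Ricⱼₖ = Σᵢ Rⁱᵢⱼₖ`. -/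
def ricci (Γ : ι → ι → ι → (ι → ℝ) → ℝ) (j k : ι) : (ι → ℝ) → ℝ :=
  fun p => ∑ i, curv Γ i i j k p

/-- Covariant derivative of the Ricci tensor,
`(∇ᵢRic)ⱼₖ = ∂ᵢRicⱼₖ − Σₘ (Γᵐᵢⱼ Ricₘₖ + Γᵐᵢₖ Ricⱼₘ)`. -/
def covRic (Γ : ι → ι → ι → (ι → ℝ) → ℝ) (i j k : ι) : (ι → ℝ) → ℝ :=
  fun p => pd i (ricci Γ j k) p -
    ∑ m, (Γ m i j p * ricci Γ m k p + Γ m i k p * ricci Γ j m p)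

/-- The Ricci tensor is cyclic parallel at `p`. -/
def CyclicParallelAt (Γ : ι → ι → ι → (ι → ℝ) → ℝ) (p : ι → ℝ) : Prop :=
  ∀ i j k, covRic Γ i j k p + covRic Γ j k i p + covRic Γ k i j p = 0

/-- Christoffel symbols `Γ̃ᶜₐᵦ = ½ Σ_d g̃ᶜᵈ (∂ₐ g̃ᵦ_d + ∂ᵦ g̃ₐ_d − ∂_d g̃ₐᵦ)` of the
Levi-Civita connection of a pseudo-Riemannian metric `g`. -/
def christoffel (g : (ι → ℝ) → Matrix ι ι ℝ) (c a b : ι) : (ι → ℝ) → ℝ :=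
  fun p => (1 / 2) * ∑ d, (g p)⁻¹ c d *
    (pd a (fun q => g q b d) p + pd b (fun q => g q a d) p - pd d (fun q => g q a b) p)

end

/-- The torsion-free connection on `ℝ³` whose only nonzero Christoffel symbols are
`Γ²₁₁ = f₁`, `Γ²₂₂ = f₂`, `Γ²₃₃ = f₃` (indices `1,2,3` are `0,1,2` in `Fin 3`). -/
def gammaF (f₁ f₂ f₃ : (Fin 3 → ℝ) → ℝ) : Fin 3 → Fin 3 → Fin 3 → (Fin 3 → ℝ) → ℝ :=
  fun k i j =>
    if k = 1 ∧ i = 0 ∧ j = 0 then f₁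
    else if k = 1 ∧ i = 1 ∧ j = 1 then f₂
    else if k = 1 ∧ i = 2 ∧ j = 2 then f₃
    else 0

section Aux

variable {i j : Fin 3} {p : Fin 3 → ℝ} {a b f : (Fin 3 → ℝ) → ℝ}

lemma pd_zero (i : Fin 3) (p : Fin 3 → ℝ) : pd i (0 : (Fin 3 → ℝ) → ℝ) p = 0 := by
  simp [pd, show (0:(Fin 3→ℝ)→ℝ) = fun _ => (0:ℝ) from rfl]

lemma pd_add (ha : DifferentiableAt ℝ a p) (hb : DifferentiableAt ℝ b p) :
    pd i (fun q => a q + b q) p = pd i a p + pd i b p := by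
  simp [pd, fderiv_fun_add ha hb]

lemma pd_neg : pd i (fun q => -a q) p = -pd i a p := by
  simp [pd, fderiv_neg]

lemma pd_mul (ha : DifferentiableAt ℝ a p) (hb : DifferentiableAt ℝ b p) :
    pd i (fun q => a q * b q) p = pd i a p * b p + a p * pd i b p := by
  simp [pd, fderiv_fun_mul ha hb]; ring

lemma pd_contDiff (hf : ContDiff ℝ (⊤:ℕ∞) f) (i : Fin 3) : ContDiff ℝ (⊤:ℕ∞) (pd i f) :=
  (hf.fderiv_right (m := (⊤:ℕ∞)) (by norm_cast)).clm_apply contDiff_const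

lemma pd_diff (hf : ContDiff ℝ (⊤:ℕ∞) f) (i : Fin 3) : Differentiable ℝ (pd i f) :=
  (pd_contDiff hf i).differentiable (by norm_cast)

lemma pd_comm (hf : ContDiff ℝ (⊤:ℕ∞) f) (i j : Fin 3) (p : Fin 3 → ℝ) :
    pd i (pd j f) p = pd j (pd i f) p := by
  have hd : Differentiable ℝ (fderiv ℝ f) :=
    (hf.fderiv_right (m := (⊤:ℕ∞)) (by norm_cast)).differentiable (by norm_cast)
  have key : ∀ (a : Fin 3) (w : Fin 3 → ℝ), fderiv ℝ (pd a f) p w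
      = fderiv ℝ (fderiv ℝ f) p w (Pi.single a 1) := by
    intro a w
    have : pd a f = fun q => (fderiv ℝ f q) (Pi.single a 1) := rfl
    rw [this, fderiv_clm_apply (hd p) (differentiableAt_const _)]
    simp
  have hsymm : IsSymmSndFDerivAt ℝ f p :=
    hf.contDiffAt.isSymmSndFDerivAt (by rw [minSmoothness_of_isRCLikeNormedField]; exact WithTop.coe_le_coe.mpr (le_top : (2:ℕ∞) ≤ ⊤))
  show fderiv ℝ (pd j f) p (Pi.single i 1) = fderiv ℝ (pd i f) p (Pi.single j 1)
  rw [key, key, hsymm]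

end Aux

section Ric

variable (f₁ f₂ f₃ : (Fin 3 → ℝ) → ℝ)

lemma ric00 : ricci (gammaF f₁ f₂ f₃) 0 0 = fun p => pd 1 f₁ p + f₁ p * f₂ p := by
  funext p; simp [ricci, curv, Fin.sum_univ_three, gammaF, pd_zero]; ring

lemma ric01 : ricci (gammaF f₁ f₂ f₃) 0 1 = fun p => -pd 0 f₂ p := by
  funext p; simp [ricci, curv, Fin.sum_univ_three, gammaF, pd_zero]

lemma ric02 : ricci (gammaF f₁ f₂ f₃) 0 2 = fun _ => (0:ℝ) := by
  funext p; simp [ricci, curv, Fin.sum_univ_three, gammaF, pd_zero]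

lemma ric10 : ricci (gammaF f₁ f₂ f₃) 1 0 = fun _ => (0:ℝ) := by
  funext p; simp [ricci, curv, Fin.sum_univ_three, gammaF, pd_zero]

lemma ric11 : ricci (gammaF f₁ f₂ f₃) 1 1 = fun _ => (0:ℝ) := by
  funext p; simp [ricci, curv, Fin.sum_univ_three, gammaF, pd_zero]

lemma ric12 : ricci (gammaF f₁ f₂ f₃) 1 2 = fun _ => (0:ℝ) := by
  funext p; simp [ricci, curv, Fin.sum_univ_three, gammaF, pd_zero]

lemma ric20 : ricci (gammaF f₁ f₂ f₃) 2 0 = fun _ => (0:ℝ) := by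
  funext p; simp [ricci, curv, Fin.sum_univ_three, gammaF, pd_zero]

lemma ric21 : ricci (gammaF f₁ f₂ f₃) 2 1 = fun p => -pd 2 f₂ p := by
  funext p; simp [ricci, curv, Fin.sum_univ_three, gammaF, pd_zero]

lemma ric22 : ricci (gammaF f₁ f₂ f₃) 2 2 = fun p => pd 1 f₃ p + f₂ p * f₃ p := by
  funext p; simp [ricci, curv, Fin.sum_univ_three, gammaF, pd_zero]

lemma pdr00 (h₁ : ContDiff ℝ (⊤:ℕ∞) f₁) (h₂ : ContDiff ℝ (⊤:ℕ∞) f₂) (i : Fin 3) (p : Fin 3 → ℝ) :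
    pd i (ricci (gammaF f₁ f₂ f₃) 0 0) p
      = pd i (pd 1 f₁) p + (pd i f₁ p * f₂ p + f₁ p * pd i f₂ p) := by
  rw [ric00, pd_add (b := fun q => f₁ q * f₂ q) (pd_diff h₁ 1 p)
    ((h₁.differentiable (by norm_cast) p).mul (h₂.differentiable (by norm_cast) p)),
    pd_mul (h₁.differentiable (by norm_cast) p) (h₂.differentiable (by norm_cast) p)]

lemma pdr22 (h₂ : ContDiff ℝ (⊤:ℕ∞) f₂) (h₃ : ContDiff ℝ (⊤:ℕ∞) f₃) (i : Fin 3) (p : Fin 3 → ℝ) :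
    pd i (ricci (gammaF f₁ f₂ f₃) 2 2) p
      = pd i (pd 1 f₃) p + (pd i f₂ p * f₃ p + f₂ p * pd i f₃ p) := by
  rw [ric22, pd_add (b := fun q => f₂ q * f₃ q) (pd_diff h₃ 1 p)
    ((h₂.differentiable (by norm_cast) p).mul (h₃.differentiable (by norm_cast) p)),
    pd_mul (h₂.differentiable (by norm_cast) p) (h₃.differentiable (by norm_cast) p)]

lemma pdr01 (i : Fin 3) (p : Fin 3 → ℝ) :
    pd i (ricci (gammaF f₁ f₂ f₃) 0 1) p = -pd i (pd 0 f₂) p := by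
  rw [ric01, pd_neg]

lemma pdr21 (i : Fin 3) (p : Fin 3 → ℝ) :
    pd i (ricci (gammaF f₁ f₂ f₃) 2 1) p = -pd i (pd 2 f₂) p := by
  rw [ric21, pd_neg]

lemma pdr02 (i : Fin 3) (p : Fin 3 → ℝ) : pd i (ricci (gammaF f₁ f₂ f₃) 0 2) p = 0 := by
  rw [ric02]; simp [pd]

lemma pdr10 (i : Fin 3) (p : Fin 3 → ℝ) : pd i (ricci (gammaF f₁ f₂ f₃) 1 0) p = 0 := by
  rw [ric10]; simp [pd]

lemma pdr11 (i : Fin 3) (p : Fin 3 → ℝ) : pd i (ricci (gammaF f₁ f₂ f₃) 1 1) p = 0 := by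
  rw [ric11]; simp [pd]

lemma pdr12 (i : Fin 3) (p : Fin 3 → ℝ) : pd i (ricci (gammaF f₁ f₂ f₃) 1 2) p = 0 := by
  rw [ric12]; simp [pd]

lemma pdr20 (i : Fin 3) (p : Fin 3 → ℝ) : pd i (ricci (gammaF f₁ f₂ f₃) 2 0) p = 0 := by
  rw [ric20]; simp [pd]

end Ric

/-- if the Ricci tensor of the connection with `Γ²₁₁ = f₁`, `Γ²₂₂ = f₂`,
`Γ²₃₃ = f₃` is cyclic parallel at every point of `ℝ³`, then the nine stated identities
hold on `ℝ³`. -/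
theorem stmt_4 (f₁ f₂ f₃ : (Fin 3 → ℝ) → ℝ)
    (hsmooth₁ : ContDiff ℝ (⊤ : ℕ∞) f₁) (hsmooth₂ : ContDiff ℝ (⊤ : ℕ∞) f₂)
    (hsmooth₃ : ContDiff ℝ (⊤ : ℕ∞) f₃)
    (hcp : ∀ p : Fin 3 → ℝ, CyclicParallelAt (gammaF f₁ f₂ f₃) p) :
    ∀ p : Fin 3 → ℝ,
      pd 0 (pd 2 f₂) p = 0 ∧
      pd 0 (pd 1 f₂) p - f₂ p * pd 0 f₂ p = 0 ∧
      pd 2 (pd 1 f₂) p - f₂ p * pd 2 f₂ p = 0 ∧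
      pd 0 (pd 1 f₁) p + 2 * f₁ p * pd 0 f₂ p + f₂ p * pd 0 f₁ p = 0 ∧
      pd 1 (pd 2 f₃) p + 2 * f₃ p * pd 2 f₂ p + f₂ p * pd 2 f₃ p = 0 ∧
      pd 1 (pd 2 f₁) p + 2 * f₁ p * pd 2 f₂ p + f₂ p * pd 2 f₁ p = 0 ∧
      pd 1 (pd 0 f₃) p + 2 * f₃ p * pd 0 f₂ p + f₂ p * pd 0 f₃ p = 0 ∧
      pd 1 (pd 1 f₁) p + f₁ p * pd 1 f₂ p + f₂ p * pd 1 f₁ p - pd 0 (pd 0 f₂) p = 0 ∧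
      pd 1 (pd 1 f₃) p + f₃ p * pd 1 f₂ p + f₂ p * pd 1 f₃ p - pd 2 (pd 2 f₂) p = 0 := by
  intro p
  refine ⟨?_, ?_, ?_, ?_, ?_, ?_, ?_, ?_, ?_⟩
  · have h := hcp p 0 1 2
    simp only [covRic, Fin.sum_univ_three,
      pdr00 f₁ f₂ f₃ hsmooth₁ hsmooth₂, pdr01 f₁ f₂ f₃, pdr02 f₁ f₂ f₃,
      pdr10 f₁ f₂ f₃, pdr11 f₁ f₂ f₃, pdr12 f₁ f₂ f₃, pdr20 f₁ f₂ f₃,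
      pdr21 f₁ f₂ f₃, pdr22 f₁ f₂ f₃ hsmooth₂ hsmooth₃] at h
    simp only [ric00 f₁ f₂ f₃, ric01 f₁ f₂ f₃, ric02 f₁ f₂ f₃, ric10 f₁ f₂ f₃,
      ric11 f₁ f₂ f₃, ric12 f₁ f₂ f₃, ric20 f₁ f₂ f₃, ric21 f₁ f₂ f₃,
      ric22 f₁ f₂ f₃, gammaF] at h
    simp at h
    rw [pd_comm hsmooth₂ 0 2 p]
    first | linear_combination h | linear_combination -h | linear_combination h/3 | linear_combination -h/3 | linarith [h]
  · have h := hcp p 0 1 1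
    simp only [covRic, Fin.sum_univ_three,
      pdr00 f₁ f₂ f₃ hsmooth₁ hsmooth₂, pdr01 f₁ f₂ f₃, pdr02 f₁ f₂ f₃,
      pdr10 f₁ f₂ f₃, pdr11 f₁ f₂ f₃, pdr12 f₁ f₂ f₃, pdr20 f₁ f₂ f₃,
      pdr21 f₁ f₂ f₃, pdr22 f₁ f₂ f₃ hsmooth₂ hsmooth₃] at h
    simp only [ric00 f₁ f₂ f₃, ric01 f₁ f₂ f₃, ric02 f₁ f₂ f₃, ric10 f₁ f₂ f₃,
      ric11 f₁ f₂ f₃, ric12 f₁ f₂ f₃, ric20 f₁ f₂ f₃, ric21 f₁ f₂ f₃,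
      ric22 f₁ f₂ f₃, gammaF] at h
    simp at h
    rw [pd_comm hsmooth₂ 0 1 p]
    first | linear_combination h | linear_combination -h | linear_combination h/3 | linear_combination -h/3 | linarith [h]
  · have h := hcp p 1 1 2
    simp only [covRic, Fin.sum_univ_three,
      pdr00 f₁ f₂ f₃ hsmooth₁ hsmooth₂, pdr01 f₁ f₂ f₃, pdr02 f₁ f₂ f₃,
      pdr10 f₁ f₂ f₃, pdr11 f₁ f₂ f₃, pdr12 f₁ f₂ f₃, pdr20 f₁ f₂ f₃,
      pdr21 f₁ f₂ f₃, pdr22 f₁ f₂ f₃ hsmooth₂ hsmooth₃] at h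
    simp only [ric00 f₁ f₂ f₃, ric01 f₁ f₂ f₃, ric02 f₁ f₂ f₃, ric10 f₁ f₂ f₃,
      ric11 f₁ f₂ f₃, ric12 f₁ f₂ f₃, ric20 f₁ f₂ f₃, ric21 f₁ f₂ f₃,
      ric22 f₁ f₂ f₃, gammaF] at h
    simp at h
    rw [pd_comm hsmooth₂ 2 1 p]
    first | linear_combination h | linear_combination -h | linear_combination h/3 | linear_combination -h/3 | linarith [h]
  · have h := hcp p 0 0 0
    simp only [covRic, Fin.sum_univ_three,
      pdr00 f₁ f₂ f₃ hsmooth₁ hsmooth₂, pdr01 f₁ f₂ f₃, pdr02 f₁ f₂ f₃,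
      pdr10 f₁ f₂ f₃, pdr11 f₁ f₂ f₃, pdr12 f₁ f₂ f₃, pdr20 f₁ f₂ f₃,
      pdr21 f₁ f₂ f₃, pdr22 f₁ f₂ f₃ hsmooth₂ hsmooth₃] at h
    simp only [ric00 f₁ f₂ f₃, ric01 f₁ f₂ f₃, ric02 f₁ f₂ f₃, ric10 f₁ f₂ f₃,
      ric11 f₁ f₂ f₃, ric12 f₁ f₂ f₃, ric20 f₁ f₂ f₃, ric21 f₁ f₂ f₃,
      ric22 f₁ f₂ f₃, gammaF] at h
    simp at h
    first | linear_combination h | linear_combination -h | linear_combination h/3 | linear_combination -h/3 | linarith [h]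
  · have h := hcp p 2 2 2
    simp only [covRic, Fin.sum_univ_three,
      pdr00 f₁ f₂ f₃ hsmooth₁ hsmooth₂, pdr01 f₁ f₂ f₃, pdr02 f₁ f₂ f₃,
      pdr10 f₁ f₂ f₃, pdr11 f₁ f₂ f₃, pdr12 f₁ f₂ f₃, pdr20 f₁ f₂ f₃,
      pdr21 f₁ f₂ f₃, pdr22 f₁ f₂ f₃ hsmooth₂ hsmooth₃] at h
    simp only [ric00 f₁ f₂ f₃, ric01 f₁ f₂ f₃, ric02 f₁ f₂ f₃, ric10 f₁ f₂ f₃,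
      ric11 f₁ f₂ f₃, ric12 f₁ f₂ f₃, ric20 f₁ f₂ f₃, ric21 f₁ f₂ f₃,
      ric22 f₁ f₂ f₃, gammaF] at h
    simp at h
    rw [pd_comm hsmooth₃ 1 2 p]
    first | linear_combination h | linear_combination -h | linear_combination h/3 | linear_combination -h/3 | linarith [h]
  · have h := hcp p 0 0 2
    simp only [covRic, Fin.sum_univ_three,
      pdr00 f₁ f₂ f₃ hsmooth₁ hsmooth₂, pdr01 f₁ f₂ f₃, pdr02 f₁ f₂ f₃,
      pdr10 f₁ f₂ f₃, pdr11 f₁ f₂ f₃, pdr12 f₁ f₂ f₃, pdr20 f₁ f₂ f₃,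
      pdr21 f₁ f₂ f₃, pdr22 f₁ f₂ f₃ hsmooth₂ hsmooth₃] at h
    simp only [ric00 f₁ f₂ f₃, ric01 f₁ f₂ f₃, ric02 f₁ f₂ f₃, ric10 f₁ f₂ f₃,
      ric11 f₁ f₂ f₃, ric12 f₁ f₂ f₃, ric20 f₁ f₂ f₃, ric21 f₁ f₂ f₃,
      ric22 f₁ f₂ f₃, gammaF] at h
    simp at h
    rw [pd_comm hsmooth₁ 1 2 p]
    first | linear_combination h | linear_combination -h | linear_combination h/3 | linear_combination -h/3 | linarith [h]
  · have h := hcp p 0 2 2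
    simp only [covRic, Fin.sum_univ_three,
      pdr00 f₁ f₂ f₃ hsmooth₁ hsmooth₂, pdr01 f₁ f₂ f₃, pdr02 f₁ f₂ f₃,
      pdr10 f₁ f₂ f₃, pdr11 f₁ f₂ f₃, pdr12 f₁ f₂ f₃, pdr20 f₁ f₂ f₃,
      pdr21 f₁ f₂ f₃, pdr22 f₁ f₂ f₃ hsmooth₂ hsmooth₃] at h
    simp only [ric00 f₁ f₂ f₃, ric01 f₁ f₂ f₃, ric02 f₁ f₂ f₃, ric10 f₁ f₂ f₃,
      ric11 f₁ f₂ f₃, ric12 f₁ f₂ f₃, ric20 f₁ f₂ f₃, ric21 f₁ f₂ f₃,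
      ric22 f₁ f₂ f₃, gammaF] at h
    simp at h
    rw [pd_comm hsmooth₃ 1 0 p]
    first | linear_combination h | linear_combination -h | linear_combination h/3 | linear_combination -h/3 | linarith [h]
  · have h := hcp p 0 0 1
    simp only [covRic, Fin.sum_univ_three,
      pdr00 f₁ f₂ f₃ hsmooth₁ hsmooth₂, pdr01 f₁ f₂ f₃, pdr02 f₁ f₂ f₃,
      pdr10 f₁ f₂ f₃, pdr11 f₁ f₂ f₃, pdr12 f₁ f₂ f₃, pdr20 f₁ f₂ f₃,
      pdr21 f₁ f₂ f₃, pdr22 f₁ f₂ f₃ hsmooth₂ hsmooth₃] at h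
    simp only [ric00 f₁ f₂ f₃, ric01 f₁ f₂ f₃, ric02 f₁ f₂ f₃, ric10 f₁ f₂ f₃,
      ric11 f₁ f₂ f₃, ric12 f₁ f₂ f₃, ric20 f₁ f₂ f₃, ric21 f₁ f₂ f₃,
      ric22 f₁ f₂ f₃, gammaF] at h
    simp at h
    first | linear_combination h | linear_combination -h | linear_combination h/3 | linear_combination -h/3 | linarith [h]
  · have h := hcp p 1 2 2
    simp only [covRic, Fin.sum_univ_three,
      pdr00 f₁ f₂ f₃ hsmooth₁ hsmooth₂, pdr01 f₁ f₂ f₃, pdr02 f₁ f₂ f₃,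
      pdr10 f₁ f₂ f₃, pdr11 f₁ f₂ f₃, pdr12 f₁ f₂ f₃, pdr20 f₁ f₂ f₃,
      pdr21 f₁ f₂ f₃, pdr22 f₁ f₂ f₃ hsmooth₂ hsmooth₃] at h
    simp only [ric00 f₁ f₂ f₃, ric01 f₁ f₂ f₃, ric02 f₁ f₂ f₃, ric10 f₁ f₂ f₃,
      ric11 f₁ f₂ f₃, ric12 f₁ f₂ f₃, ric20 f₁ f₂ f₃, ric21 f₁ f₂ f₃,
      ric22 f₁ f₂ f₃, gammaF] at h
    simp at h
    first | linear_combination h | linear_combination -h | linear_combination h/3 | linear_combination -h/3 | linarith [h]
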